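/- arXiv:1501.02575 — 4 statements merged into one kernel-verified Lean document; each statement's English description precedes it below -/
import Mathlib

section
/- Let F : (0,1) → ℝ be a continuous function satisfying F(1-x) + F(y/(1-x)) = F(y) + F(1 - x/(1-y)) for all x, y ∈ (0,1) with x + y ∈ (0,1). Then F is constant. -/
/-- Scalar specialization of Lemma `lfconst`: a continuous solution of the
single-function fundamental equation of information is constant. -/
theorem lfconst_dim_one (F : ℝ → ℝ) (hF : ContinuousOn F (Set.Ioo 0 1))
    (heq : ∀ x ∈ Set.Ioo (0:ℝ) 1, ∀ y ∈ Set.Ioo (0:ℝ) 1, x + y ∈ Set.Ioo (0:ℝ) 1 →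
      F (1 - x) + F (y / (1 - x)) = F y + F (1 - x / (1 - y))) :
    ∃ c : ℝ, ∀ x ∈ Set.Ioo (0:ℝ) 1, F x = c := by
  -- Key identity (B): F s + F t = F (s*t) + F (s*(1-t)/(1-s*t))
  have hB : ∀ s ∈ Set.Ioo (0:ℝ) 1, ∀ t ∈ Set.Ioo (0:ℝ) 1,
      F s + F t = F (s*t) + F (s*(1-t)/(1-s*t)) := by
    rintro s ⟨hs0, hs1⟩ t ⟨ht0, ht1⟩
    have hst0 : 0 < s*t := mul_pos hs0 ht0
    have hst1 : s*t < 1 := by nlinarith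
    have h := heq (1-s) ⟨by linarith, by linarith⟩ (s*t) ⟨hst0, hst1⟩
      ⟨by nlinarith, by nlinarith⟩
    have h2 : s*t/s = t := by field_simp
    have h3 : (1:ℝ) - (1-s)/(1-s*t) = s*(1-t)/(1-s*t) := by
      have hne : (1:ℝ) - s*t ≠ 0 := by nlinarith
      field_simp
      ring
    simp only [show (1:ℝ) - (1-s) = s by ring] at h
    rw [h2, h3] at h
    linarith
  -- Symmetry consequence
  have hsym : ∀ s ∈ Set.Ioo (0:ℝ) 1, ∀ t ∈ Set.Ioo (0:ℝ) 1,
      F (s*(1-t)/(1-s*t)) = F (t*(1-s)/(1-s*t)) := by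
    intro s hs t ht
    have h1 := hB s hs t ht
    have h2 := hB t ht s hs
    rw [mul_comm t s] at h2
    linarith
  -- Any two points with a+b<1 have the same value
  have hab : ∀ a ∈ Set.Ioo (0:ℝ) 1, ∀ b ∈ Set.Ioo (0:ℝ) 1, a + b < 1 → F a = F b := by
    rintro a ⟨ha0, ha1⟩ b ⟨hb0, hb1⟩ hab1
    have h1b : (0:ℝ) < 1 - b := by linarith
    have h1a : (0:ℝ) < 1 - a := by linarith
    have h1ab : (0:ℝ) < 1 - a - b := by linarith
    have hne1 : (1:ℝ) - a ≠ 0 := ne_of_gt h1a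
    have hne2 : (1:ℝ) - b ≠ 0 := ne_of_gt h1b
    have hne3 : (1:ℝ) - a - b ≠ 0 := ne_of_gt h1ab
    set s := a/(1-b) with hs_def
    set t := b/(1-a) with ht_def
    have hs : s ∈ Set.Ioo (0:ℝ) 1 := ⟨div_pos ha0 h1b, (div_lt_one h1b).mpr (by linarith)⟩
    have ht : t ∈ Set.Ioo (0:ℝ) 1 := ⟨div_pos hb0 h1a, (div_lt_one h1a).mpr (by linarith)⟩
    have key := hsym s hs t ht
    have hprod : (1:ℝ) - s*t = (1-a-b)/((1-b)*(1-a)) := by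
      rw [hs_def, ht_def]
      field_simp
      ring
    have ht' : (1:ℝ) - t = (1-a-b)/(1-a) := by
      rw [ht_def]; field_simp
    have hs' : (1:ℝ) - s = (1-a-b)/(1-b) := by
      rw [hs_def]; field_simp; ring
    have e1 : s*(1-t)/(1-s*t) = a := by
      rw [hprod, ht', hs_def]
      field_simp
    have e2 : t*(1-s)/(1-s*t) = b := by
      rw [hprod, hs', ht_def]
      field_simp
    rw [e1, e2] at key
    exact key
  refine ⟨F (1/4), ?_⟩
  rintro x hx
  obtain ⟨hx0, hx1⟩ := hx
  have hm : (1-x)/2 ∈ Set.Ioo (0:ℝ) 1 := ⟨by linarith, by linarith⟩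
  have h1 : F x = F ((1-x)/2) := hab x ⟨hx0, hx1⟩ _ hm (by linarith)
  have h2 : F ((1-x)/2) = F (1/4) := hab _ hm (1/4) (by norm_num) (by linarith)
  linarith
end

section
/- Let n ≥ 1 and let f : {positive definite real symmetric n×n matrices} → ℝ be a continuous function satisfying f(X) + f(Y) = f(X^{1/2} · Y · X^{1/2}) for all positive definite symmetric X, Y, where X^{1/2} is the unique positive definite symmetric square root and · is matrix multiplication. Then there exists κ ∈ ℝ such that f(X) = κ · log(det X) for all positive definite X. -/
open Matrix

open Classical in
/-- The unique positive semidefinite square root of a matrix (junk value `0`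
off the positive semidefinite cone). -/
noncomputable def msqrt {n : ℕ} (X : Matrix (Fin n) (Fin n) ℝ) : Matrix (Fin n) (Fin n) ℝ :=
  if h : X.PosSemidef then
    (h.1.eigenvectorUnitary : Matrix (Fin n) (Fin n) ℝ) *
      diagonal ((↑) ∘ (√·) ∘ h.1.eigenvalues) *
      (star h.1.eigenvectorUnitary : Matrix (Fin n) (Fin n) ℝ)
  else 0

namespace W1Aux

variable {n : ℕ}

lemma msqrt_mul_self {P : Matrix (Fin n) (Fin n) ℝ} (hP : P.PosSemidef) :
    msqrt (P * P) = P := by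
  rw [show P * P = P ^ 2 from (sq P).symm, msqrt, dif_pos (hP.pow 2)]
  have h1 := (hP.pow 2).1.cfc_eq Real.sqrt
  rw [IsHermitian.cfc, Unitary.conjStarAlgAut_apply] at h1
  have hspec : ∀ x ∈ spectrum ℝ P, 0 ≤ x := by
    rw [hP.1.spectrum_real_eq_range_eigenvalues]
    rintro _ ⟨i, rfl⟩
    exact hP.eigenvalues_nonneg i
  have h2 : cfc Real.sqrt (P ^ 2) = P := by
    rw [← cfc_comp_pow Real.sqrt 2 P (by fun_prop) hP.1.isSelfAdjoint]
    rw [cfc_congr (g := fun x => x) (fun x hx => Real.sqrt_sq (hspec x hx))]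
    exact cfc_id' ℝ P hP.1.isSelfAdjoint
  exact h1.symm.trans h2

lemma posDef_conj {A B : Matrix (Fin n) (Fin n) ℝ} (hA : A.PosDef) (hB : IsUnit B) :
    (B * A * Bᴴ).PosDef := by
  exact hA.mul_mul_conjTranspose_same (Matrix.vecMul_injective_iff_isUnit.mpr hB)



section Good

variable {n : ℕ} (f : Matrix (Fin n) (Fin n) ℝ → ℝ)

/-- `A` is good if conjugation by it shifts `f` by a constant. -/
def Good (A : Matrix (Fin n) (Fin n) ℝ) : Prop :=
  IsUnit A ∧ ∀ X : Matrix (Fin n) (Fin n) ℝ, X.PosDef →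
    f (A * X * Aᴴ) = f (A * Aᴴ) + f X

variable {f}
variable (heq : ∀ X Y : Matrix (Fin n) (Fin n) ℝ, X.PosDef → Y.PosDef →
      f X + f Y = f (msqrt X * Y * msqrt X))

include heq in
lemma good_posDef {P : Matrix (Fin n) (Fin n) ℝ} (hP : P.PosDef) : Good f P := by
  refine ⟨hP.isUnit, fun X hX => ?_⟩
  have hPP : (P * P).PosDef := by
    have h := posDef_conj Matrix.PosDef.one hP.isUnit
    rwa [mul_one, hP.isHermitian.eq] at h
  have h := heq (P * P) X hPP hX
  rw [msqrt_mul_self hP.posSemidef] at h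
  rw [hP.isHermitian.eq, ← h]

lemma Good.mul {A B : Matrix (Fin n) (Fin n) ℝ} (hA : Good f A) (hB : Good f B) :
    Good f (A * B) := by
  refine ⟨hA.1.mul hB.1, fun X hX => ?_⟩
  have hBX : (B * X * Bᴴ).PosDef := posDef_conj hX hB.1
  have hBB : (B * Bᴴ).PosDef := by
    have h := posDef_conj Matrix.PosDef.one hB.1
    rwa [mul_one] at h
  have e1 : (A * B) * X * (A * B)ᴴ = A * (B * X * Bᴴ) * Aᴴ := by
    rw [conjTranspose_mul]; noncomm_ring
  have e2 : (A * B) * (A * B)ᴴ = A * (B * Bᴴ) * Aᴴ := by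
    rw [conjTranspose_mul]; noncomm_ring
  rw [e1, e2, hA.2 _ hBX, hA.2 _ hBB, hB.2 _ hX]
  ring

include heq in
lemma f_one : f 1 = 0 := by
  have h := heq 1 1 Matrix.PosDef.one Matrix.PosDef.one
  have hm : msqrt (1 : Matrix (Fin n) (Fin n) ℝ) = 1 := by
    have := msqrt_mul_self (Matrix.PosDef.one.posSemidef :
      (1 : Matrix (Fin n) (Fin n) ℝ).PosSemidef)
    rwa [mul_one] at this
  rw [hm, mul_one, mul_one] at h
  linarith

end Good
section Transvection

variable {n : ℕ} {f : Matrix (Fin n) (Fin n) ℝ → ℝ}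
variable (heq : ∀ X Y : Matrix (Fin n) (Fin n) ℝ, X.PosDef → Y.PosDef →
      f X + f Y = f (msqrt X * Y * msqrt X))

lemma transvection_entry (i j : Fin n) (c : ℝ) (x y : Fin n) :
    transvection i j c x y = (if x = y then 1 else 0) + (if i = x ∧ j = y then c else 0) := by
  simp [transvection, Matrix.add_apply, Matrix.one_apply, single_apply, of_apply]

lemma transvection_conjTranspose (i j : Fin n) (c : ℝ) :
    (transvection i j c)ᴴ = transvection j i c := by
  ext a b
  rw [conjTranspose_apply, transvection_entry, transvection_entry, star_trivial]
  by_cases h1 : a = b <;> by_cases h2 : i = b <;> by_cases h3 : j = a <;> simp_all <;>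
    exact fun h => h1 h.symm

include heq in
lemma good_transvection {i j : Fin n} (hij : i ≠ j) (c : ℝ) :
    Good f (transvection i j c) := by
  set t := transvection i j c with ht
  set N := transvection i j (-c) with hN
  set lam : Fin n → ℝ := fun k => if k = i then 2 else 1 with hlam
  set lam' : Fin n → ℝ := fun k => if k = i then 2⁻¹ else 1 with hlam'
  have hlampos : ∀ k, 0 < lam k := fun k => by by_cases h : k = i <;> simp [hlam, h]
  have hlam'pos : ∀ k, 0 < lam' k := fun k => by by_cases h : k = i <;> simp [hlam', h]
  have hNunit : IsUnit N := by
    rw [isUnit_iff_isUnit_det, hN, det_transvection_of_ne _ _ hij]; exact isUnit_one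
  have htHunit : IsUnit tᴴ := by
    rw [ht, transvection_conjTranspose, isUnit_iff_isUnit_det,
      det_transvection_of_ne _ _ hij.symm]; exact isUnit_one
  have h1 : (N * Nᴴ).PosDef := by
    have h := posDef_conj Matrix.PosDef.one hNunit
    rwa [mul_one] at h
  have h2 : (tᴴ * diagonal lam * t).PosDef := by
    have h := posDef_conj (Matrix.PosDef.diagonal hlampos) htHunit
    rwa [conjTranspose_conjTranspose] at h
  have h3 : (diagonal lam').PosDef := Matrix.PosDef.diagonal hlam'pos
  have key : N * Nᴴ * (tᴴ * diagonal lam * t) * diagonal lam' = t := by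
    have hcanc : Nᴴ * tᴴ = 1 := by
      rw [hN, ht, transvection_conjTranspose, transvection_conjTranspose,
        transvection_mul_transvection_same _ _ hij.symm]
      simp
    calc N * Nᴴ * (tᴴ * diagonal lam * t) * diagonal lam'
        = N * ((Nᴴ * tᴴ) * (diagonal lam * (t * diagonal lam'))) := by noncomm_ring
      _ = N * (diagonal lam * (t * diagonal lam')) := by rw [hcanc, one_mul]
      _ = t := by
          ext a b
          rcases eq_or_ne a i with hai | hai
          · rw [hai, hN, transvection_mul_apply_same, Matrix.diagonal_mul,
              Matrix.diagonal_mul, Matrix.mul_diagonal, Matrix.mul_diagonal]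
            simp only [ht, transvection_entry]
            have hlami : lam i = 2 := if_pos rfl
            have hlamj : lam j = 1 := if_neg hij.symm
            rw [hlami, hlamj]
            rcases eq_or_ne b i with hbi | hbi
            · rw [hbi]
              simp [hlam', hij, hij.symm]
            · rcases eq_or_ne b j with hbj | hbj
              · rw [hbj]
                have : lam' j = 1 := if_neg hij.symm
                rw [this]
                simp [hij, hij.symm]
                ring
              · simp [hbi, hbj, Ne.symm hbi, Ne.symm hbj]
          · rw [hN, transvection_mul_apply_of_ne _ _ _ _ hai, Matrix.diagonal_mul,
              Matrix.mul_diagonal]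
            simp only [ht, transvection_entry]
            have hlama : lam a = 1 := if_neg hai
            rw [hlama, one_mul]
            rcases eq_or_ne b i with hbi | hbi
            · rw [hbi]
              simp [hlam', Ne.symm hai, hai]
            · have : lam' b = 1 := if_neg hbi
              rw [this, mul_one]
  have hg : Good f (N * Nᴴ * (tᴴ * diagonal lam * t) * diagonal lam') :=
    ((good_posDef heq h1).mul (good_posDef heq h2)).mul (good_posDef heq h3)
  rwa [key] at hg

end Transvection
section Wmat

variable {n : ℕ} {f : Matrix (Fin n) (Fin n) ℝ → ℝ}
variable (heq : ∀ X Y : Matrix (Fin n) (Fin n) ℝ, X.PosDef → Y.PosDef →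
      f X + f Y = f (msqrt X * Y * msqrt X))

/-- Rotation by `π/2` in the `(i,j)` coordinate plane, as a product of three transvections. -/
noncomputable def Wmat (i j : Fin n) : Matrix (Fin n) (Fin n) ℝ :=
  transvection i j (-1) * (transvection j i 1 * transvection i j (-1))

lemma trans_mul_entry (p q : Fin n) (c : ℝ) (M : Matrix (Fin n) (Fin n) ℝ) (x y : Fin n) :
    (transvection p q c * M) x y = M x y + (if x = p then c * M q y else 0) := by
  rcases eq_or_ne x p with h | h
  · rw [h, if_pos rfl, transvection_mul_apply_same]
  · rw [if_neg h, transvection_mul_apply_of_ne _ _ _ _ h, add_zero]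

lemma Wmat_mul_entry {i j : Fin n} (hij : i ≠ j) (M : Matrix (Fin n) (Fin n) ℝ) (a b : Fin n) :
    (Wmat i j * M) a b = if a = i then -(M j b) else if a = j then M i b else M a b := by
  simp only [Wmat, Matrix.mul_assoc, trans_mul_entry]
  rcases eq_or_ne a i with hai | hai
  · rw [hai]
    simp [hij, hij.symm]
  · rcases eq_or_ne a j with haj | haj
    · rw [haj]
      simp [hij, hij.symm]
    · simp [hai, haj]

lemma Wmat_entry {i j : Fin n} (hij : i ≠ j) (a b : Fin n) :
    Wmat i j a b = if a = i then -((1 : Matrix (Fin n) (Fin n) ℝ) j b)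
      else if a = j then (1 : Matrix (Fin n) (Fin n) ℝ) i b
      else (1 : Matrix (Fin n) (Fin n) ℝ) a b := by
  have h := Wmat_mul_entry hij (1 : Matrix (Fin n) (Fin n) ℝ) a b
  rwa [mul_one] at h

lemma Wmat_mul_conjTranspose {i j : Fin n} (hij : i ≠ j) :
    Wmat i j * (Wmat i j)ᴴ = 1 := by
  ext a b
  rw [Wmat_mul_entry hij]
  simp only [conjTranspose_apply, star_trivial, Wmat_entry hij, Matrix.one_apply]
  by_cases hai : a = i <;> by_cases haj : a = j <;> by_cases hbi : b = i <;>
    by_cases hbj : b = j <;> simp_all [eq_comm]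

lemma Wmat_conj_diagonal {i j : Fin n} (hij : i ≠ j) (d : Fin n → ℝ) :
    Wmat i j * diagonal d * (Wmat i j)ᴴ
      = diagonal (fun k => if k = i then d j else if k = j then d i else d k) := by
  rw [Matrix.mul_assoc]
  ext a b
  rw [Wmat_mul_entry hij]
  simp only [Matrix.diagonal_mul, conjTranspose_apply, star_trivial, Wmat_entry hij,
    Matrix.diagonal_apply, Matrix.one_apply]
  by_cases hai : a = i <;> by_cases haj : a = j <;> by_cases hbi : b = i <;>
    by_cases hbj : b = j <;> simp_all [eq_comm]

lemma Wmat_sq {i j : Fin n} (hij : i ≠ j) :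
    Wmat i j * Wmat i j = diagonal (fun k => if k = i ∨ k = j then (-1 : ℝ) else 1) := by
  ext a b
  rw [Wmat_mul_entry hij]
  simp only [Wmat_entry hij, Matrix.diagonal_apply, Matrix.one_apply]
  by_cases hai : a = i <;> by_cases haj : a = j <;> by_cases hbi : b = i <;>
    by_cases hbj : b = j <;> simp_all [eq_comm]

include heq in
lemma good_Wmat {i j : Fin n} (hij : i ≠ j) : Good f (Wmat i j) :=
  (good_transvection heq hij (-1)).mul
    ((good_transvection heq hij.symm 1).mul (good_transvection heq hij (-1)))

end Wmat
section Signs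

variable {n : ℕ} {f : Matrix (Fin n) (Fin n) ℝ → ℝ}
variable (heq : ∀ X Y : Matrix (Fin n) (Fin n) ℝ, X.PosDef → Y.PosDef →
      f X + f Y = f (msqrt X * Y * msqrt X))

include heq in
lemma good_sign (T : Finset (Fin n)) (hT : Even T.card) :
    Good f (diagonal fun k => if k ∈ T then (-1 : ℝ) else 1) := by
  induction T using Finset.strongInduction with
  | _ T ih =>
    rcases T.eq_empty_or_nonempty with rfl | hne
    · have : (diagonal fun k : Fin n => if k ∈ (∅ : Finset (Fin n)) then (-1 : ℝ) else 1)
          = diagonal fun _ => (1 : ℝ) := by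
        congr 1
      rw [this]
      exact good_posDef heq (Matrix.PosDef.diagonal fun _ => one_pos)
    · obtain ⟨i, hi⟩ := hne
      have hcard2 : 2 ≤ T.card := by
        rcases hT with ⟨m, hm⟩
        have h1 : 1 ≤ T.card := Finset.card_pos.mpr ⟨i, hi⟩
        omega
      have herase : 1 ≤ (T.erase i).card := by
        rw [Finset.card_erase_of_mem hi]; omega
      obtain ⟨j, hj⟩ := Finset.card_pos.mp herase
      have hji : j ≠ i := Finset.ne_of_mem_erase hj
      have hjT : j ∈ T := Finset.mem_of_mem_erase hj
      set T' := (T.erase i).erase j with hT'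
      have hsub : T' ⊂ T := by
        exact ssubset_of_subset_of_ssubset (Finset.erase_subset _ _) (Finset.erase_ssubset hi)
      have hcard' : T'.card = T.card - 2 := by
        rw [hT', Finset.card_erase_of_mem hj, Finset.card_erase_of_mem hi]
        omega
      have hT'even : Even T'.card := by
        rcases hT with ⟨m, hm⟩
        refine ⟨m - 1, by omega⟩
      have hfun : (fun k => if k ∈ T then (-1 : ℝ) else 1)
          = fun k => (if k ∈ T' then (-1 : ℝ) else 1) * (if k = j ∨ k = i then (-1 : ℝ) else 1) := by
        funext k
        rcases eq_or_ne k i with rfl | hki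
        · simp [hT', hi, hji.symm]
        · rcases eq_or_ne k j with rfl | hkj
          · simp [hT', hjT]
          · have : k ∈ T' ↔ k ∈ T := by simp [hT', hki, hkj]
            simp [hki, hkj, this]
      rw [hfun, ← diagonal_mul_diagonal]
      exact (ih T' hsub hT'even).mul (by rw [← Wmat_sq hji]; exact (good_Wmat heq hji).mul (good_Wmat heq hji))

include heq in
lemma good_list (L : List (Matrix.TransvectionStruct (Fin n) ℝ)) :
    Good f (L.map Matrix.TransvectionStruct.toMatrix).prod := by
  induction L with
  | nil => simpa using good_posDef heq Matrix.PosDef.one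
  | cons t L ih =>
    rw [List.map_cons, List.prod_cons]
    exact (good_transvection heq t.hij t.c).mul ih

include heq in
lemma good_det_pos {M : Matrix (Fin n) (Fin n) ℝ} (hM : 0 < M.det) : Good f M := by
  obtain ⟨L, L', D, rfl⟩ := Matrix.Pivot.exists_list_transvec_mul_diagonal_mul_list_transvec M
  have hD : 0 < ∏ k, D k := by
    have h := hM
    rwa [det_mul, det_mul, Matrix.TransvectionStruct.det_toMatrix_prod,
      Matrix.TransvectionStruct.det_toMatrix_prod, one_mul, mul_one, det_diagonal] at h
  have hDne : ∀ k, D k ≠ 0 := fun k => by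
    intro h
    rw [Finset.prod_eq_zero (Finset.mem_univ k) h] at hD
    exact lt_irrefl 0 hD
  set T : Finset (Fin n) := Finset.univ.filter (fun k => D k < 0) with hTdef
  have hsplit : D = fun k => (if k ∈ T then (-1 : ℝ) else 1) * |D k| := by
    funext k
    by_cases h : D k < 0
    · simp [hTdef, h, abs_of_neg h]
    · have h' : 0 < D k := lt_of_le_of_ne (not_lt.mp h) (Ne.symm (hDne k))
      simp [hTdef, h, abs_of_pos h']
  have habs : 0 < ∏ k, |D k| := Finset.prod_pos fun k _ => abs_pos.mpr (hDne k)
  have hsignprod : (0:ℝ) < ∏ k, (if k ∈ T then (-1 : ℝ) else 1) := by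
    have : (∏ k, D k) = (∏ k, (if k ∈ T then (-1 : ℝ) else 1)) * ∏ k, |D k| := by
      rw [← Finset.prod_mul_distrib]
      exact Finset.prod_congr rfl fun k _ => by rw [← congrFun hsplit k]
    nlinarith [this ▸ hD]
  have hTeven : Even T.card := by
    by_contra hodd
    rw [Fintype.prod_ite_mem, Finset.prod_const] at hsignprod
    rw [(Nat.not_even_iff_odd.mp hodd).neg_one_pow] at hsignprod
    linarith
  have hgd : Good f (diagonal D) := by
    rw [show diagonal D = diagonal (fun k => if k ∈ T then (-1 : ℝ) else 1)
        * diagonal (fun k => |D k|) by rw [diagonal_mul_diagonal, ← hsplit]]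
    exact (good_sign heq T hTeven).mul
      (good_posDef heq (Matrix.PosDef.diagonal fun k => abs_pos.mpr (hDne k)))
  rw [Matrix.mul_assoc]
  exact (good_list heq L).mul (hgd.mul (good_list heq L'))

end Signs
section Spectral

variable {n : ℕ}

lemma exists_orth_conj (hn : 1 ≤ n) {X : Matrix (Fin n) (Fin n) ℝ} (hX : X.PosDef) :
    ∃ V : Matrix (Fin n) (Fin n) ℝ, V.det = 1 ∧ V * Vᴴ = 1 ∧
      X = V * diagonal hX.1.eigenvalues * Vᴴ := by
  have hH := hX.1
  set U : Matrix (Fin n) (Fin n) ℝ := (hH.eigenvectorUnitary : Matrix (Fin n) (Fin n) ℝ) with hUdef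
  have hmem := hH.eigenvectorUnitary.2
  rw [Unitary.mem_iff] at hmem
  have hUU' : Uᴴ * U = 1 := by rw [← Matrix.star_eq_conjTranspose]; exact hmem.1
  have hUU : U * Uᴴ = 1 := by rw [← Matrix.star_eq_conjTranspose]; exact hmem.2
  have hsp : X = U * diagonal hH.eigenvalues * Uᴴ := by
    have h := hH.spectral_theorem
    rwa [Unitary.conjStarAlgAut_apply, RCLike.ofReal_real_eq_id, Function.id_comp, Matrix.star_eq_conjTranspose] at h
  have hdet2 : U.det * U.det = 1 := by
    have h := congrArg Matrix.det hUU
    rwa [det_mul, det_conjTranspose, star_trivial, det_one] at h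
  rcases mul_self_eq_one_iff.mp hdet2 with h1 | hm1
  · exact ⟨U, h1, hUU, hsp⟩
  · set i0 : Fin n := ⟨0, hn⟩
    set s0 : Fin n → ℝ := fun k => if k = i0 then -1 else 1 with hs0
    set S : Matrix (Fin n) (Fin n) ℝ := diagonal s0 with hS
    have hSH : Sᴴ = S := by
      rw [hS, diagonal_conjTranspose]
      congr 1
    have hSS : S * S = 1 := by
      rw [hS, diagonal_mul_diagonal]
      have h1 : (fun k => s0 k * s0 k) = fun _ => (1 : ℝ) := by
        funext k
        by_cases h : k = i0 <;> simp [hs0, h]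
      rw [h1, diagonal_one]
    have hdetS : S.det = -1 := by
      rw [hS, det_diagonal]
      simp only [hs0]
      rw [Fintype.prod_ite_eq' i0 (fun _ => (-1 : ℝ))]
    refine ⟨U * S, ?_, ?_, ?_⟩
    · rw [det_mul, hm1, hdetS]; norm_num
    · rw [conjTranspose_mul, hSH, Matrix.mul_assoc, ← Matrix.mul_assoc S, hSS, one_mul, hUU]
    · have hSDS : S * diagonal hH.eigenvalues * S = diagonal hH.eigenvalues := by
        ext a b
        rw [hS, Matrix.mul_diagonal, Matrix.diagonal_mul]
        rcases eq_or_ne a b with rfl | hab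
        · rw [Matrix.diagonal_apply_eq]
          by_cases h : a = i0 <;> simp [hs0, h]
        · rw [Matrix.diagonal_apply_ne _ hab]
          ring
      rw [conjTranspose_mul, hSH]
      calc X = U * diagonal hH.eigenvalues * Uᴴ := hsp
        _ = U * (S * diagonal hH.eigenvalues * S) * Uᴴ := by rw [hSDS]
        _ = U * S * diagonal hH.eigenvalues * (S * Uᴴ) := by noncomm_ring

end Spectral
end W1Aux

/-- Continuous solution of the `w₁`-logarithmic Cauchy equation on positive
definite real symmetric matrices. -/
theorem w1_logarithmic_continuous (n : ℕ) (hn : 1 ≤ n)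
    (f : Matrix (Fin n) (Fin n) ℝ → ℝ)
    (hf : ContinuousOn f {X | X.PosDef})
    (heq : ∀ X Y : Matrix (Fin n) (Fin n) ℝ, X.PosDef → Y.PosDef →
      f X + f Y = f (msqrt X * Y * msqrt X)) :
    ∃ κ : ℝ, ∀ X : Matrix (Fin n) (Fin n) ℝ, X.PosDef → f X = κ * Real.log X.det := by
  classical
  have f1 : f 1 = 0 := W1Aux.f_one heq
  -- additivity on positive diagonal matrices
  have hdiag : ∀ d e : Fin n → ℝ, (∀ k, 0 < d k) → (∀ k, 0 < e k) →
      f (diagonal fun k => d k * e k) = f (diagonal d) + f (diagonal e) := by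
    intro d e hd he
    have hP : (diagonal fun k => Real.sqrt (d k)).PosDef :=
      Matrix.PosDef.diagonal fun k => Real.sqrt_pos.mpr (hd k)
    have h := (W1Aux.good_posDef heq hP).2 (diagonal e) (Matrix.PosDef.diagonal he)
    have hPH : (diagonal fun k => Real.sqrt (d k))ᴴ = diagonal fun k => Real.sqrt (d k) :=
      hP.isHermitian.eq
    rw [hPH, diagonal_mul_diagonal, diagonal_mul_diagonal, diagonal_mul_diagonal] at h
    have e1 : (fun k => Real.sqrt (d k) * e k * Real.sqrt (d k)) = fun k => d k * e k := by
      funext k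
      have : Real.sqrt (d k) * Real.sqrt (d k) = d k := Real.mul_self_sqrt (hd k).le
      calc Real.sqrt (d k) * e k * Real.sqrt (d k)
          = Real.sqrt (d k) * Real.sqrt (d k) * e k := by ring
        _ = d k * e k := by rw [this]
    have e2 : (fun k => Real.sqrt (d k) * Real.sqrt (d k)) = d := by
      funext k
      exact Real.mul_self_sqrt (hd k).le
    rw [e1, e2] at h
    exact h
  -- the additive continuous function on log-coordinates
  set g : (Fin n → ℝ) → ℝ := fun v => f (diagonal fun k => Real.exp (v k)) with hgdef
  have hgadd : ∀ v w, g (v + w) = g v + g w := by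
    intro v w
    have e1 : (fun k => Real.exp ((v + w) k)) = fun k => Real.exp (v k) * Real.exp (w k) := by
      funext k
      simp [Real.exp_add]
    show f (diagonal fun k => Real.exp ((v + w) k)) = _
    rw [e1]
    exact hdiag _ _ (fun k => Real.exp_pos _) (fun k => Real.exp_pos _)
  have hgcont : Continuous g := by
    have hc : Continuous fun v : Fin n → ℝ => diagonal (fun k => Real.exp (v k)) :=
      Continuous.matrix_diagonal (by continuity)
    have h := hf.comp_continuous hc fun v =>
      (Matrix.PosDef.diagonal fun k => Real.exp_pos (v k) :
        (diagonal fun k => Real.exp (v k)).PosDef)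
    exact h
  set G : (Fin n → ℝ) →+ ℝ := AddMonoidHom.mk' g hgadd with hGdef
  have hsum : ∀ v : Fin n → ℝ, g v = ∑ k, v k * g (fun l => if k = l then 1 else 0) := by
    intro v
    have h := LinearMap.pi_apply_eq_sum_univ ((G.toRealLinearMap hgcont).toLinearMap) v
    simpa [smul_eq_mul, hGdef] using h
  set i0 : Fin n := ⟨0, hn⟩ with hi0
  set κ : ℝ := g (fun l => if i0 = l then 1 else 0) with hκ
  -- swap invariance
  have hswap : ∀ (i j : Fin n), i ≠ j → ∀ d : Fin n → ℝ, (∀ k, 0 < d k) →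
      f (diagonal fun k => if k = i then d j else if k = j then d i else d k)
        = f (diagonal d) := by
    intro i j hij d hd
    have h := (W1Aux.good_Wmat heq hij).2 (diagonal d) (Matrix.PosDef.diagonal hd)
    rw [W1Aux.Wmat_conj_diagonal hij, W1Aux.Wmat_mul_conjTranspose hij, f1, zero_add] at h
    exact h
  have hck : ∀ k : Fin n, g (fun l => if k = l then 1 else 0) = κ := by
    intro k
    rcases eq_or_ne k i0 with rfl | hk
    · rfl
    · have h := hswap k i0 hk (fun l => Real.exp (if k = l then 1 else 0))
        (fun l => Real.exp_pos _)
      have e1 : (fun l => if l = k then Real.exp (if k = i0 then 1 else 0)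
            else if l = i0 then Real.exp (if k = k then 1 else 0)
            else Real.exp (if k = l then 1 else 0))
          = fun l => Real.exp (if i0 = l then 1 else 0) := by
        funext l
        rcases eq_or_ne l k with rfl | hlk
        · simp [hk, Ne.symm hk]
        · rcases eq_or_ne l i0 with rfl | hli
          · simp [hk, Ne.symm hk]
          · simp [hlk, hli, Ne.symm hlk, Ne.symm hli]
      rw [e1] at h
      exact h.symm
  refine ⟨κ, fun X hX => ?_⟩
  obtain ⟨V, hVdet, hVV, hXV⟩ := W1Aux.exists_orth_conj hn hX
  set ev : Fin n → ℝ := hX.1.eigenvalues with hevdef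
  have hev : ∀ k, 0 < ev k := hX.eigenvalues_pos
  have hfX : f X = f (diagonal ev) := by
    rw [hXV, (W1Aux.good_det_pos heq (by rw [hVdet]; exact one_pos)).2 _
      (Matrix.PosDef.diagonal hev), hVV, f1, zero_add]
  have hdetX : X.det = ∏ k, ev k := by
    rw [hXV, det_mul, det_mul, hVdet, one_mul, det_conjTranspose, star_trivial, hVdet,
      mul_one, det_diagonal]
  have hexp : (fun k => Real.exp (Real.log (ev k))) = ev := by
    funext k
    exact Real.exp_log (hev k)
  have hfd : f (diagonal ev) = g (fun k => Real.log (ev k)) := by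
    show _ = f (diagonal fun k => Real.exp (Real.log (ev k)))
    rw [hexp]
  rw [hfX, hfd, hsum]
  have : ∀ k ∈ Finset.univ, Real.log (ev k)
      * g (fun l => if k = l then 1 else 0) = Real.log (ev k) * κ :=
    fun k _ => by rw [hck k]
  rw [Finset.sum_congr rfl this, ← Finset.sum_mul, ← Real.log_prod
    (fun k _ => (hev k).ne'), ← hdetX, mul_comm]
end

section
/- Fix n ≥ 1 and s = (s₁,...,sₙ) ∈ ℝⁿ. Define for a positive definite real symmetric n×n matrix X the generalized power function Δ_s(X) = Δ₁(X)^{s₁-s₂} · Δ₂(X)^{s₂-s₃} · ... · Δₙ(X)^{sₙ}, where Δ_k(X) is the k-th leading principal minor of X. Then f(X) = log Δ_s(X) satisfies f(T_X · Y · T_Xᵀ) = f(X) + f(Y) for all positive definite X, Y, where T_X is the lower triangular Cholesky factor of X with positive diagonal (X = T_X · T_Xᵀ). -/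
open Matrix

/-- The `k`-th leading principal minor of an `n × n` matrix. -/
noncomputable def pminor {n : ℕ} (X : Matrix (Fin n) (Fin n) ℝ) (k : ℕ) (hk : k ≤ n) : ℝ :=
  (X.submatrix (fun i : Fin k => Fin.castLE hk i) (fun i : Fin k => Fin.castLE hk i)).det

/-- The generalized power function `Δ_s(X) = ∏ₖ Δₖ(X)^(sₖ - sₖ₊₁)` (with `sₙ₊₁ = 0`). -/
noncomputable def gpower {n : ℕ} (s : Fin n → ℝ) (X : Matrix (Fin n) (Fin n) ℝ) : ℝ :=
  ∏ k : Fin n,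
    (pminor X ((k : ℕ) + 1) k.isLt) ^ (s k - if h : (k : ℕ) + 1 < n then s ⟨(k : ℕ) + 1, h⟩ else 0)

lemma sum_restrict {n k : ℕ} (hk : k ≤ n) (g : Fin n → ℝ)
    (hg : ∀ b : Fin n, k ≤ (b : ℕ) → g b = 0) :
    ∑ b : Fin n, g b = ∑ b : Fin k, g (Fin.castLE hk b) := by
  show ∑ b : Fin n, g b = ∑ b : Fin k, g (Fin.castLEEmb hk b)
  rw [← Finset.sum_map Finset.univ (Fin.castLEEmb hk) g]
  refine (Finset.sum_subset (Finset.subset_univ _) ?_).symm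
  intro b _ hb
  refine hg b (le_of_not_gt fun h => hb ?_)
  simp only [Finset.mem_map, Finset.mem_univ, true_and]
  exact ⟨⟨(b : ℕ), h⟩, by ext; simp [Fin.castLEEmb]⟩

lemma submatrix_conj {n k : ℕ} (hk : k ≤ n) (T Y : Matrix (Fin n) (Fin n) ℝ)
    (hlow : ∀ i j : Fin n, i < j → T i j = 0) :
    ((T * Y * Tᵀ).submatrix (Fin.castLE hk) (Fin.castLE hk)) =
      (T.submatrix (Fin.castLE hk) (Fin.castLE hk)) *
        (Y.submatrix (Fin.castLE hk) (Fin.castLE hk)) *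
        (T.submatrix (Fin.castLE hk) (Fin.castLE hk))ᵀ := by
  ext i j
  simp only [submatrix_apply, mul_apply, transpose_apply]
  have houter : ∀ b : Fin n, k ≤ (b : ℕ) →
      (∑ a : Fin n, T (Fin.castLE hk i) a * Y a b) * T (Fin.castLE hk j) b = 0 := by
    intro b hb
    have : T (Fin.castLE hk j) b = 0 := hlow _ _ (by
      have : (j : ℕ) < k := j.isLt
      exact Fin.lt_def.mpr (by simp; omega))
    rw [this, mul_zero]
  rw [sum_restrict hk _ houter]
  refine Finset.sum_congr rfl fun b _ => ?_
  congr 1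
  have hinner : ∀ a : Fin n, k ≤ (a : ℕ) →
      T (Fin.castLE hk i) a * Y a (Fin.castLE hk b) = 0 := by
    intro a ha
    have : T (Fin.castLE hk i) a = 0 := hlow _ _ (by
      have : (i : ℕ) < k := i.isLt
      exact Fin.lt_def.mpr (by simp; omega))
    rw [this, zero_mul]
  rw [sum_restrict hk _ hinner]

lemma pminor_pos {n : ℕ} {Y : Matrix (Fin n) (Fin n) ℝ} (hY : Y.PosDef)
    (k : ℕ) (hk : k ≤ n) : 0 < pminor Y k hk := by
  have hpd : (Y.submatrix (Fin.castLE hk) (Fin.castLE hk)).PosDef := by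
    refine Matrix.PosDef.of_dotProduct_mulVec_pos ?_ ?_
    · have := hY.1
      ext i j
      simpa using (congrFun (congrFun this (Fin.castLE hk j)) (Fin.castLE hk i)).symm
    · intro x hx
      set y : Fin n → ℝ := fun a => if h : (a : ℕ) < k then x ⟨(a : ℕ), h⟩ else 0 with hy
      have hyc : ∀ b : Fin k, y (Fin.castLE hk b) = x b := by
        intro b; simp [hy, b.isLt]
      have hyne : y ≠ 0 := by
        intro h0
        apply hx
        funext b
        have := congrFun h0 (Fin.castLE hk b)
        rwa [hyc b] at this
      have hpos := hY.dotProduct_mulVec_pos hyne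
      have key : dotProduct (star y) (Y *ᵥ y) =
          dotProduct (star x) ((Y.submatrix (Fin.castLE hk) (Fin.castLE hk)) *ᵥ x) := by
        simp only [dotProduct, mulVec, star_trivial]
        rw [sum_restrict hk _ (fun b hb => by
          have : y b = 0 := by simp [hy]; omega
          rw [this, zero_mul])]
        refine Finset.sum_congr rfl fun b _ => ?_
        rw [hyc b]
        congr 1
        simp only [dotProduct, submatrix_apply]
        rw [sum_restrict hk _ (fun a ha => by
          have : y a = 0 := by simp [hy]; omega
          rw [this, mul_zero])]
        exact Finset.sum_congr rfl fun a _ => by rw [hyc a]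
      rw [key] at hpos
      exact hpos
  exact hpd.det_pos

lemma pminor_mul {n : ℕ} (T X Y : Matrix (Fin n) (Fin n) ℝ)
    (hlow : ∀ i j : Fin n, i < j → T i j = 0)
    (hchol : X = T * Tᵀ) (k : ℕ) (hk : k ≤ n) :
    pminor (T * Y * Tᵀ) k hk = pminor X k hk * pminor Y k hk := by
  have h1 := submatrix_conj hk T Y hlow
  have h2 := submatrix_conj hk T 1 hlow
  rw [mul_one] at h2
  unfold pminor
  rw [hchol]
  have e1 : (fun i : Fin k => Fin.castLE hk i) = Fin.castLE hk := rfl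
  have hone : (1 : Matrix (Fin n) (Fin n) ℝ).submatrix (Fin.castLE hk) (Fin.castLE hk) = 1 := by
    ext i j
    simp [Matrix.one_apply, Fin.castLE_inj, submatrix_apply]
  rw [e1, h1, h2, hone, mul_one, det_mul, det_mul, det_mul, det_transpose]
  ring

lemma gpower_pos {n : ℕ} (s : Fin n → ℝ) {Y : Matrix (Fin n) (Fin n) ℝ} (hY : Y.PosDef) :
    0 < gpower s Y :=
  Finset.prod_pos fun k _ => Real.rpow_pos_of_pos (pminor_pos hY _ _) _

/-- `log Δ_s` is `w₂`-logarithmic for the triangular (Cholesky) multiplication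
algorithm. -/
theorem log_gpower_w2_logarithmic (n : ℕ) (s : Fin n → ℝ)
    (X Y T : Matrix (Fin n) (Fin n) ℝ)
    (hX : X.PosDef) (hY : Y.PosDef)
    (hlow : ∀ i j : Fin n, i < j → T i j = 0)
    (hdiag : ∀ i : Fin n, 0 < T i i)
    (hchol : X = T * Tᵀ) :
    Real.log (gpower s (T * Y * Tᵀ)) = Real.log (gpower s X) + Real.log (gpower s Y) := by
  have hg : gpower s (T * Y * Tᵀ) = gpower s X * gpower s Y := by
    unfold gpower
    rw [← Finset.prod_mul_distrib]
    refine Finset.prod_congr rfl fun k _ => ?_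
    rw [pminor_mul T X Y hlow hchol _ k.isLt,
      Real.mul_rpow (pminor_pos hX _ _).le (pminor_pos hY _ _).le]
  rw [hg, Real.log_mul (gpower_pos s hX).ne' (gpower_pos s hY).ne']
end

section
/- Let f : {X positive definite real symmetric n×n, I - X positive definite} → ℝ be a continuous function satisfying f(I - X) + f((I-X)^{-1/2}·Y·(I-X)^{-1/2}) = f(Y) + f(I - (I-Y)^{-1/2}·X·(I-Y)^{-1/2}) for all positive definite symmetric X, Y with I - X - Y positive definite. Then f is constant. -/
open Matrix

namespace LfAux

variable {n : ℕ}

local notation "Mat" => Matrix (Fin n) (Fin n) ℝ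

/-- The explicit square root of a positive semidefinite matrix (as in `msqrt`). -/
noncomputable def psqrt {X : Mat} (h : X.PosSemidef) : Mat :=
  (h.1.eigenvectorUnitary : Matrix (Fin n) (Fin n) ℝ) *
    diagonal ((↑) ∘ (√·) ∘ h.1.eigenvalues) *
    (star h.1.eigenvectorUnitary : Matrix (Fin n) (Fin n) ℝ)

lemma psqrt_mul_self {X : Mat} (h : X.PosSemidef) : psqrt h * psqrt h = X := by
  set U : Mat := (h.1.eigenvectorUnitary : Mat)
  have hU1 : star U * U = 1 := Unitary.coe_star_mul_self _
  set d : Fin n → ℝ := h.1.eigenvalues with hd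
  have hsp : X = U * diagonal d * star U := by
    have := h.1.spectral_theorem
    rwa [Unitary.conjStarAlgAut_apply, RCLike.ofReal_real_eq_id, Function.id_comp] at this
  have hdd : diagonal (Real.sqrt ∘ d) * diagonal (Real.sqrt ∘ d) = diagonal d := by
    rw [diagonal_mul_diagonal]
    congr 1
    funext i
    exact Real.mul_self_sqrt (h.eigenvalues_nonneg i)
  show U * diagonal (Real.sqrt ∘ d) * star U * (U * diagonal (Real.sqrt ∘ d) * star U) = X
  rw [hsp, ← hdd, mul_assoc (U * diagonal (Real.sqrt ∘ d)) (star U) _,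
    ← mul_assoc (star U) (U * diagonal (Real.sqrt ∘ d)) _,
    ← mul_assoc (star U) U (diagonal (Real.sqrt ∘ d)), hU1, one_mul]
  noncomm_ring

lemma posSemidef_psqrt {X : Mat} (h : X.PosSemidef) : (psqrt h).PosSemidef := by
  set U : Mat := (h.1.eigenvectorUnitary : Mat)
  show (U * diagonal (Real.sqrt ∘ h.1.eigenvalues) * star U).PosSemidef
  rw [Matrix.star_eq_conjTranspose]
  exact (PosSemidef.diagonal (fun i => Real.sqrt_nonneg _)).mul_mul_conjTranspose_same U

lemma diag_fun_comm (d : Fin n → ℝ) (g : ℝ → ℝ) (C : Mat)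
    (h : C * diagonal d = diagonal d * C) :
    C * diagonal (g ∘ d) = diagonal (g ∘ d) * C := by
  ext i j
  have h' : (C * diagonal d) i j = (diagonal d * C) i j := by rw [h]
  rw [mul_diagonal, diagonal_mul] at h'
  rw [mul_diagonal, diagonal_mul]
  rcases eq_or_ne (d j) (d i) with he | hne
  · simp [Function.comp, he, mul_comm]
  · have hC : C i j = 0 := by
      by_contra h0
      apply hne
      have h'' : C i j * d j = C i j * d i := by rw [h', mul_comm]
      exact mul_left_cancel₀ h0 h''
    simp [hC]

lemma sqrt_comm {A B : Mat} (hA : A.PosSemidef) (h : A * B = B * A) :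
    psqrt hA * B = B * psqrt hA := by
  set U : Mat := (hA.1.eigenvectorUnitary : Mat)
  have hU1 : star U * U = 1 := Unitary.coe_star_mul_self _
  have hU2 : U * star U = 1 := Unitary.coe_mul_star_self _
  set d : Fin n → ℝ := hA.1.eigenvalues with hd
  have hsp : A = U * diagonal d * star U := by
    have := hA.1.spectral_theorem
    rwa [Unitary.conjStarAlgAut_apply, RCLike.ofReal_real_eq_id, Function.id_comp] at this
  have hsq : psqrt hA = U * diagonal (Real.sqrt ∘ d) * star U := by
    rfl
  set C : Mat := star U * B * U with hCdef
  have hBC : B = U * C * star U := by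
    rw [hCdef]
    calc B = (U * star U) * B * (U * star U) := by rw [hU2, one_mul, mul_one]
    _ = U * (star U * B * U) * star U := by noncomm_ring
  have hC : C * diagonal d = diagonal d * C := by
    have h2 : U * (diagonal d * C) * star U = U * (C * diagonal d) * star U := by
      calc U * (diagonal d * C) * star U
          = (U * diagonal d * star U) * (U * C * star U) := by
            rw [mul_assoc (U * diagonal d) (star U) _, ← mul_assoc (star U) (U * C) _,
              ← mul_assoc (star U) U C, hU1, one_mul]
            noncomm_ring
      _ = A * B := by rw [← hsp, ← hBC]
      _ = B * A := h
      _ = (U * C * star U) * (U * diagonal d * star U) := by rw [← hsp, ← hBC]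
      _ = U * (C * diagonal d) * star U := by
            rw [mul_assoc (U * C) (star U) _, ← mul_assoc (star U) (U * diagonal d) _,
              ← mul_assoc (star U) U (diagonal d), hU1, one_mul]
            noncomm_ring
    have cancel : ∀ X : Mat, star U * (U * X * star U) * U = X := by
      intro X
      simp only [← mul_assoc]
      rw [hU1, one_mul, mul_assoc, hU1, mul_one]
    have h3 := congrArg (fun M => star U * M * U) h2
    rw [cancel, cancel] at h3
    exact h3.symm
  have hC' := diag_fun_comm d Real.sqrt C hC
  rw [hsq, hBC]
  calc U * diagonal (Real.sqrt ∘ d) * star U * (U * C * star U)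
      = U * (diagonal (Real.sqrt ∘ d) * C) * star U := by
        rw [mul_assoc (U * diagonal (Real.sqrt ∘ d)) (star U) _,
          ← mul_assoc (star U) (U * C) _, ← mul_assoc (star U) U C, hU1, one_mul]
        noncomm_ring
  _ = U * (C * diagonal (Real.sqrt ∘ d)) * star U := by rw [hC']
  _ = (U * C * star U) * (U * diagonal (Real.sqrt ∘ d) * star U) := by
        rw [mul_assoc (U * C) (star U) _, ← mul_assoc (star U) (U * diagonal (Real.sqrt ∘ d)) _,
          ← mul_assoc (star U) U (diagonal (Real.sqrt ∘ d)), hU1, one_mul]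
        noncomm_ring


lemma msqrt_eq {X : Mat} (h : X.PosSemidef) : msqrt X = psqrt h := dif_pos h

lemma msqrt_mul_self {X : Mat} (h : X.PosSemidef) : msqrt X * msqrt X = X := by
  rw [msqrt_eq h]; exact psqrt_mul_self h

lemma msqrt_posSemidef {X : Mat} (h : X.PosSemidef) : (msqrt X).PosSemidef := by
  rw [msqrt_eq h]; exact posSemidef_psqrt h

lemma msqrt_comm {X B : Mat} (h : X.PosSemidef) (hc : X * B = B * X) :
    msqrt X * B = B * msqrt X := by
  rw [msqrt_eq h]; exact sqrt_comm h hc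

lemma posDef_of_posSemidef_isUnit {M : Mat} (h : M.PosSemidef) (hu : IsUnit M) :
    M.PosDef := by
  exact h.posDef_iff_isUnit.mpr hu

lemma msqrt_posDef {X : Mat} (h : X.PosDef) : (msqrt X).PosDef := by
  refine posDef_of_posSemidef_isUnit (msqrt_posSemidef h.posSemidef) ?_
  have hdet : (msqrt X).det * (msqrt X).det = X.det := by
    rw [← Matrix.det_mul, msqrt_mul_self h.posSemidef]
  rw [Matrix.isUnit_iff_isUnit_det]
  refine isUnit_of_mul_isUnit_left (y := (msqrt X).det) ?_
  rw [hdet]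
  exact (Matrix.isUnit_iff_isUnit_det X).mp h.isUnit

lemma posDef_mul_of_comm {a b : Mat} (ha : a.PosDef) (hb : b.PosDef)
    (hc : a * b = b * a) : (a * b).PosDef := by
  have hs := ha.posSemidef
  have hsb : msqrt a * b = b * msqrt a := msqrt_comm hs hc
  have hsym : (msqrt a)ᴴ = msqrt a := (msqrt_posSemidef hs).1
  have key : msqrt a * b * (msqrt a)ᴴ = a * b := by
    rw [hsym, hsb, mul_assoc, msqrt_mul_self hs, ← hc]
  refine posDef_of_posSemidef_isUnit ?_ (ha.isUnit.mul hb.isUnit)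
  rw [← key]
  exact hb.posSemidef.mul_mul_conjTranspose_same _

lemma comm_inv {x y : Mat} (hy : IsUnit y) (h : x * y = y * x) : x * y⁻¹ = y⁻¹ * x := by
  have hyd : IsUnit y.det := (Matrix.isUnit_iff_isUnit_det y).mp hy
  calc x * y⁻¹ = y⁻¹ * (y * x) * y⁻¹ := by
        rw [← mul_assoc, Matrix.nonsing_inv_mul y hyd, one_mul]
  _ = y⁻¹ * (x * y) * y⁻¹ := by rw [h]
  _ = y⁻¹ * x := by
        simp only [mul_assoc]
        rw [Matrix.mul_nonsing_inv y hyd, mul_one]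

/-- `(msqrt w)⁻¹ * y * (msqrt w)⁻¹ = y * w⁻¹` when `w` is PosDef and commutes with `y`. -/
lemma conj_msqrt_inv {w y : Mat} (hw : w.PosDef) (hcom : w * y = y * w) :
    (msqrt w)⁻¹ * y * (msqrt w)⁻¹ = y * w⁻¹ := by
  have hs : msqrt w * y = y * msqrt w := msqrt_comm hw.posSemidef hcom
  have hsu : IsUnit (msqrt w) := (msqrt_posDef hw).isUnit
  have h1 : (msqrt w)⁻¹ * y = y * (msqrt w)⁻¹ := (comm_inv hsu hs.symm).symm
  rw [h1, mul_assoc, ← Matrix.mul_inv_rev, msqrt_mul_self hw.posSemidef]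


lemma comm_inv' {x y : Mat} (hy : IsUnit y) (h : Commute x y) : Commute x y⁻¹ :=
  comm_inv hy h.eq

lemma uv_comm {a b : Mat} (hc : a * b = b * a) (hA : (1 - a).PosDef) (hB : (1 - b).PosDef) :
    Commute (a * (1 - b)⁻¹) (b * (1 - a)⁻¹) := by
  have Cab : Commute a b := hc
  have CaA : Commute a (1 - a) := (Commute.one_right a).sub_right (Commute.refl a)
  have CaB : Commute a (1 - b) := (Commute.one_right a).sub_right Cab
  have CbA : Commute b (1 - a) := (Commute.one_right b).sub_right Cab.symm
  have CbB : Commute b (1 - b) := (Commute.one_right b).sub_right (Commute.refl b)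
  have CAB : Commute (1 - a) (1 - b) := (Commute.one_left (1 - b)).sub_left CaB
  have CaAi : Commute a (1 - a)⁻¹ := comm_inv' hA.isUnit CaA
  have CbBi : Commute b (1 - b)⁻¹ := comm_inv' hB.isUnit CbB
  have CAiBi : Commute (1 - a)⁻¹ (1 - b)⁻¹ :=
    comm_inv' hB.isUnit (comm_inv' hA.isUnit CAB.symm).symm
  exact (Cab.mul_right CaAi).mul_left (CbBi.symm.mul_right CAiBi.symm)

lemma step (f : Mat → ℝ)
    (heq : ∀ X Y : Mat, X.PosDef → Y.PosDef → (1 - X - Y).PosDef →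
      f (1 - X) + f ((msqrt (1 - X))⁻¹ * Y * (msqrt (1 - X))⁻¹) =
        f Y + f (1 - (msqrt (1 - Y))⁻¹ * X * (msqrt (1 - Y))⁻¹))
    {a b : Mat} (hc : a * b = b * a) (ha : a.PosDef) (hb : b.PosDef)
    (hE : (1 - a - b).PosDef) :
    f (a * (1 - b)⁻¹) + f (b * (1 - a)⁻¹) =
      f (a * (1 - b)⁻¹ * (b * (1 - a)⁻¹)) + f a := by
  have hA : (1 - a).PosDef := by
    have h := hE.add hb
    rwa [show (1 : Mat) - a - b + b = 1 - a from by abel] at h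
  have hB : (1 - b).PosDef := by
    have h := hE.add ha
    rwa [show (1 : Mat) - a - b + a = 1 - b from by abel] at h
  have hAd : IsUnit (1 - a).det := (Matrix.isUnit_iff_isUnit_det _).mp hA.isUnit
  have hBd : IsUnit (1 - b).det := (Matrix.isUnit_iff_isUnit_det _).mp hB.isUnit
  have Cab : Commute a b := hc
  have CaA : Commute a (1 - a) := (Commute.one_right a).sub_right (Commute.refl a)
  have CaB : Commute a (1 - b) := (Commute.one_right a).sub_right Cab
  have CbA : Commute b (1 - a) := (Commute.one_right b).sub_right Cab.symm
  have CbB : Commute b (1 - b) := (Commute.one_right b).sub_right (Commute.refl b)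
  have CAB : Commute (1 - a) (1 - b) := (Commute.one_left (1 - b)).sub_left CaB
  have CaAi : Commute a (1 - a)⁻¹ := comm_inv' hA.isUnit CaA
  have CaBi : Commute a (1 - b)⁻¹ := comm_inv' hB.isUnit CaB
  have CbAi : Commute b (1 - a)⁻¹ := comm_inv' hA.isUnit CbA
  have CbBi : Commute b (1 - b)⁻¹ := comm_inv' hB.isUnit CbB
  have CAiBi : Commute (1 - a)⁻¹ (1 - b)⁻¹ :=
    comm_inv' hB.isUnit (comm_inv' hA.isUnit CAB.symm).symm
  have CEAi : Commute (1 - a - b) (1 - a)⁻¹ :=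
    ((Commute.one_left _).sub_left CaAi).sub_left CbAi
  have CEBi : Commute (1 - a - b) (1 - b)⁻¹ :=
    ((Commute.one_left _).sub_left CaBi).sub_left CbBi
  have Cuv : Commute (a * (1 - b)⁻¹) (b * (1 - a)⁻¹) := uv_comm hc hA hB
  set u : Mat := a * (1 - b)⁻¹ with hu_def
  set v : Mat := b * (1 - a)⁻¹ with hv_def
  have hu : u.PosDef := posDef_mul_of_comm ha hB.inv CaBi.eq
  have hv : v.PosDef := posDef_mul_of_comm hb hA.inv CbAi.eq
  have hud : IsUnit u.det := (Matrix.isUnit_iff_isUnit_det _).mp hu.isUnit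
  have h1u : 1 - u = (1 - a - b) * (1 - b)⁻¹ := by
    rw [show (1 : Mat) - a - b = (1 - b) - a from by abel, sub_mul,
      Matrix.mul_nonsing_inv _ hBd, hu_def]
  have h1v : 1 - v = (1 - a - b) * (1 - a)⁻¹ := by
    rw [show (1 : Mat) - a - b = (1 - a) - b from by abel, sub_mul,
      Matrix.mul_nonsing_inv _ hAd, hv_def]
  have h1u_pd : (1 - u).PosDef := by
    rw [h1u]; exact posDef_mul_of_comm hE hB.inv CEBi.eq
  have h1v_pd : (1 - v).PosDef := by
    rw [h1v]; exact posDef_mul_of_comm hE hA.inv CEAi.eq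
  have huvE : u * v = a * b * ((1 - b)⁻¹ * (1 - a)⁻¹) := by
    rw [hu_def, hv_def]
    calc a * (1 - b)⁻¹ * (b * (1 - a)⁻¹) = a * ((1 - b)⁻¹ * b) * (1 - a)⁻¹ := by
          noncomm_ring
    _ = a * (b * (1 - b)⁻¹) * (1 - a)⁻¹ := by rw [← CbBi.eq]
    _ = a * b * ((1 - b)⁻¹ * (1 - a)⁻¹) := by noncomm_ring
  have hone : (1 - a) * (1 - b) * ((1 - b)⁻¹ * (1 - a)⁻¹) = 1 := by
    rw [mul_assoc (1 - a) (1 - b) _, ← mul_assoc (1 - b) (1 - b)⁻¹ (1 - a)⁻¹,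
      Matrix.mul_nonsing_inv _ hBd, one_mul, Matrix.mul_nonsing_inv _ hAd]
  have h1uv : 1 - u * v = (1 - a - b) * ((1 - b)⁻¹ * (1 - a)⁻¹) := by
    rw [huvE, show (1 : Mat) - a - b = (1 - a) * (1 - b) - a * b from by noncomm_ring,
      sub_mul, hone]
  have h1uv_pd : (1 - u * v).PosDef := by
    rw [h1uv]
    exact posDef_mul_of_comm hE (posDef_mul_of_comm hB.inv hA.inv CAiBi.symm.eq)
      (CEBi.mul_right CEAi).eq
  have h1uvd : IsUnit (1 - u * v).det :=
    (Matrix.isUnit_iff_isUnit_det _).mp h1uv_pd.isUnit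
  have huv_pd : (u * v).PosDef := posDef_mul_of_comm hu hv Cuv.eq
  have Cu1v : Commute u (1 - v) := (Commute.one_right u).sub_right Cuv
  have hXYpd : (1 - (1 - u) - u * v).PosDef := by
    rw [show (1 : Mat) - (1 - u) - u * v = u * (1 - v) from by rw [mul_one_sub]; abel]
    exact posDef_mul_of_comm hu h1v_pd Cu1v.eq
  have H := heq (1 - u) (u * v) h1u_pd huv_pd hXYpd
  rw [sub_sub_cancel] at H
  have e2 : (msqrt u)⁻¹ * (u * v) * (msqrt u)⁻¹ = v := by
    rw [conj_msqrt_inv hu ((Commute.refl u).mul_right Cuv).eq, Cuv.eq, mul_assoc,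
      Matrix.mul_nonsing_inv _ hud, mul_one]
  have Cuvu : Commute (u * v) (1 - u) :=
    (Commute.one_right _).sub_right ((Commute.refl u).mul_left Cuv.symm)
  have e3 : (msqrt (1 - u * v))⁻¹ * (1 - u) * (msqrt (1 - u * v))⁻¹
      = (1 - u) * (1 - u * v)⁻¹ :=
    conj_msqrt_inv h1uv_pd ((Commute.one_left (1 - u)).sub_left Cuvu).eq
  have key2 : (1 - u * v) - (1 - u) = a * (1 - u * v) := by
    rw [show (1 : Mat) - u * v - (1 - u) = u * (1 - v) from by rw [mul_one_sub]; abel,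
      h1v, h1uv, hu_def]
    calc a * (1 - b)⁻¹ * ((1 - a - b) * (1 - a)⁻¹)
        = a * ((1 - b)⁻¹ * (1 - a - b)) * (1 - a)⁻¹ := by noncomm_ring
    _ = a * ((1 - a - b) * (1 - b)⁻¹) * (1 - a)⁻¹ := by rw [← CEBi.eq]
    _ = a * ((1 - a - b) * ((1 - b)⁻¹ * (1 - a)⁻¹)) := by noncomm_ring
  have e4 : (1 : Mat) - (1 - u) * (1 - u * v)⁻¹ = a := by
    calc (1 : Mat) - (1 - u) * (1 - u * v)⁻¹
        = (1 - u * v) * (1 - u * v)⁻¹ - (1 - u) * (1 - u * v)⁻¹ := by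
          rw [Matrix.mul_nonsing_inv _ h1uvd]
    _ = ((1 - u * v) - (1 - u)) * (1 - u * v)⁻¹ := (sub_mul _ _ _).symm
    _ = a * ((1 - u * v) * (1 - u * v)⁻¹) := by rw [key2, mul_assoc]
    _ = a := by rw [Matrix.mul_nonsing_inv _ h1uvd, mul_one]
  rw [e2, e3, e4] at H
  exact H

lemma key (f : Mat → ℝ)
    (heq : ∀ X Y : Mat, X.PosDef → Y.PosDef → (1 - X - Y).PosDef →
      f (1 - X) + f ((msqrt (1 - X))⁻¹ * Y * (msqrt (1 - X))⁻¹) =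
        f Y + f (1 - (msqrt (1 - Y))⁻¹ * X * (msqrt (1 - Y))⁻¹))
    {a b : Mat} (hc : a * b = b * a) (ha : a.PosDef) (hb : b.PosDef)
    (hE : (1 - a - b).PosDef) : f a = f b := by
  have hA : (1 - a).PosDef := by
    have h := hE.add hb
    rwa [show (1 : Mat) - a - b + b = 1 - a from by abel] at h
  have hB : (1 - b).PosDef := by
    have h := hE.add ha
    rwa [show (1 : Mat) - a - b + a = 1 - b from by abel] at h
  have h1 := step f heq hc ha hb hE
  have hE' : (1 - b - a).PosDef := by
    rwa [show (1 : Mat) - b - a = 1 - a - b from by abel]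
  have h2 := step f heq hc.symm hb ha hE'
  rw [← (uv_comm hc hA hB).eq] at h2
  linarith


lemma posDef_smul_one {t : ℝ} (ht : 0 < t) : (t • (1 : Mat)).PosDef := by
  rw [Matrix.smul_one_eq_diagonal]
  exact Matrix.posDef_diagonal_iff.mpr fun _ => ht

lemma exists_small {P : Mat} (hn : 0 < n) (hP : P.PosDef) :
    ∃ t : ℝ, 0 < t ∧ t < 1 ∧ (P - t • 1).PosDef := by
  haveI : Nonempty (Fin n) := ⟨⟨0, hn⟩⟩
  set U : Mat := (hP.1.eigenvectorUnitary : Mat) with hU_def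
  have hU1 : star U * U = 1 := Unitary.coe_star_mul_self _
  have hU2 : U * star U = 1 := Unitary.coe_mul_star_self _
  set d : Fin n → ℝ := hP.1.eigenvalues with hd
  have hsp : P = U * diagonal d * star U := by
    have := hP.1.spectral_theorem
    rwa [Unitary.conjStarAlgAut_apply, RCLike.ofReal_real_eq_id, Function.id_comp] at this
  obtain ⟨i₀, _, hmin⟩ := Finset.exists_mem_eq_inf' (Finset.univ_nonempty) d
  set m := Finset.univ.inf' Finset.univ_nonempty d with hm_def
  have hm : 0 < m := by rw [hmin]; exact hP.eigenvalues_pos i₀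
  refine ⟨min (m / 2) (1 / 2), lt_min (by linarith) (by norm_num),
    lt_of_le_of_lt (min_le_right _ _) (by norm_num), ?_⟩
  set t := min (m / 2) (1 / 2) with ht_def
  have htm : t < m := lt_of_le_of_lt (min_le_left _ _) (by linarith)
  have hdt : (diagonal d : Mat) - t • 1 = diagonal (fun i => d i - t) := by
    rw [Matrix.smul_one_eq_diagonal, Matrix.diagonal_sub]
  have hPt : P - t • 1 = U * diagonal (fun i => d i - t) * star U := by
    have h1 : (t • (1 : Mat)) = U * (t • (1 : Mat)) * star U := by
      rw [mul_smul_comm, mul_one, smul_mul_assoc, hU2]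
    rw [hsp, h1, ← sub_mul, ← mul_sub, hdt]
  have hdiagpd : (diagonal (fun i => d i - t) : Mat).PosDef :=
    Matrix.posDef_diagonal_iff.mpr fun i => by
      have hle : m ≤ d i := Finset.inf'_le d (Finset.mem_univ i)
      linarith
  rw [hPt]
  refine posDef_of_posSemidef_isUnit ?_ ?_
  · rw [Matrix.star_eq_conjTranspose]
    exact hdiagpd.posSemidef.mul_mul_conjTranspose_same U
  · have iU : Invertible U := invertibleOfRightInverse _ _ hU2
    have isU : Invertible (star U) := invertibleOfRightInverse _ _ hU1
    have hUu : IsUnit U := isUnit_of_invertible U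
    have hsUu : IsUnit (star U) := isUnit_of_invertible (star U)
    exact (hUu.mul hdiagpd.isUnit).mul hsUu

end LfAux

/-- Lemma lfconst of the paper on the cone of positive definite real symmetric
matrices with multiplication algorithm `w₁(X) = P(X^{1/2})`. -/
theorem lemma_lfconst_matrix (n : ℕ)
    (f : Matrix (Fin n) (Fin n) ℝ → ℝ)
    (hf : ContinuousOn f {X | X.PosDef ∧ (1 - X).PosDef})
    (heq : ∀ X Y : Matrix (Fin n) (Fin n) ℝ, X.PosDef → Y.PosDef →
      (1 - X - Y).PosDef →
      f (1 - X) + f ((msqrt (1 - X))⁻¹ * Y * (msqrt (1 - X))⁻¹) =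
        f Y + f (1 - (msqrt (1 - Y))⁻¹ * X * (msqrt (1 - Y))⁻¹)) :
    ∃ c : ℝ, ∀ X : Matrix (Fin n) (Fin n) ℝ, X.PosDef → (1 - X).PosDef → f X = c := by
  rcases Nat.eq_zero_or_pos n with hn | hn
  · subst hn
    refine ⟨f 1, fun X _ _ => ?_⟩
    congr 1
    ext i j
    exact i.elim0
  · refine ⟨f ((2⁻¹ : ℝ) • 1), fun X hX h1X => ?_⟩
    have hscalar : ∀ s t : ℝ, 0 < s → 0 < t → s + t < 1 → f (s • 1) = f (t • 1) := by
      intro s t hs ht hst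
      refine LfAux.key f heq ?_ (LfAux.posDef_smul_one hs) (LfAux.posDef_smul_one ht) ?_
      · simp only [smul_mul_assoc, one_mul, smul_smul]
        rw [mul_comm]
      · have e : (1 : Matrix (Fin n) (Fin n) ℝ) - s • 1 - t • 1 = (1 - s - t) • 1 := by
          rw [sub_smul, sub_smul, one_smul]
        rw [e]
        exact LfAux.posDef_smul_one (by linarith)
    obtain ⟨t, ht0, ht1, htP⟩ := LfAux.exists_small hn h1X
    have h1 : f X = f (t • 1) := by
      refine LfAux.key f heq ?_ hX (LfAux.posDef_smul_one ht0) htP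
      rw [mul_smul_comm, smul_mul_assoc, mul_one, one_mul]
    have hr0 : (0:ℝ) < min (1 - t) 2⁻¹ / 2 :=
      div_pos (lt_min (by linarith) (by norm_num)) two_pos
    have hra : min (1 - t) 2⁻¹ / 2 ≤ (1 - t) / 2 := by
      have := min_le_left (1 - t) 2⁻¹
      linarith
    have hrb : min (1 - t) 2⁻¹ / 2 ≤ (2⁻¹:ℝ) / 2 := by
      have := min_le_right (1 - t) 2⁻¹
      linarith
    have h2a := hscalar t (min (1 - t) 2⁻¹ / 2) ht0 hr0 (by linarith)
    have h2b := hscalar 2⁻¹ (min (1 - t) 2⁻¹ / 2) (by norm_num) hr0 (by norm_num at hrb ⊢; linarith)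
    rw [h1, h2a, ← h2b]
end
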